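/- Let X, Y ∈ Mat_n(ℂ), i ∈ ℂⁿ, and let j : ℂⁿ → ℂ[x] be a ℂ-linear map satisfying: for every v ∈ ℂⁿ, v + X·Y·v − Y·X·v = (j(v))(X)·i. Then there exist a ℂ-linear map h : ℂⁿ → ℂ[x], a ℂ-linear endomorphism Y′ of ℂⁿ, and a ℂ-linear functional j₀ : ℂⁿ → ℂ such that: (a) Y′(v) = Y·v + (h(v))(X)·i for all v; (b) for all v, j(v) + x·h(v) − h(X·v) equals the constant polynomial j₀(v); and (c) the Calogero-Moser relation holds: for every v ∈ ℂⁿ, v + X·Y′(v) − Y′(X·v) = j₀(v)·i (equivalently, I + X·Y′ − Y′·X equals the rank-one matrix i·j₀ᵀ). Moreover, the triple (h, Y′, j₀) with these properties is unique. -/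
import Mathlib

open Polynomial Matrix Finset

noncomputable def CMdivX : Polynomial ℂ →ₗ[ℂ] Polynomial ℂ where
  toFun := Polynomial.divX
  map_add' := fun _ _ => Polynomial.divX_add
  map_smul' := by
    intro c p
    ext k
    simp [Polynomial.coeff_divX, Polynomial.coeff_smul]

lemma CMdivX_pow_coeff (m : ℕ) (p : Polynomial ℂ) (k : ℕ) :
    ((CMdivX ^ m) p).coeff k = p.coeff (k + m) := by
  induction m generalizing p with
  | zero => simp
  | succ m ih =>
      have h1 : (CMdivX ^ (m+1)) p = (CMdivX ^ m) (CMdivX p) := by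
        rw [pow_succ, Module.End.mul_apply]
      rw [h1, ih]
      show p.divX.coeff (k+m) = p.coeff (k + (m+1))
      rw [Polynomial.coeff_divX]
      norm_num [Nat.add_assoc]

lemma CMbound (n : ℕ) (F : (Fin n → ℂ) →ₗ[ℂ] Polynomial ℂ) :
    ∃ D : ℕ, ∀ (v : Fin n → ℂ) (k : ℕ), D < k → (F v).coeff k = 0 := by
  refine ⟨Finset.univ.sup (fun x : Fin n => (F ((Pi.single x 1 : Fin n → ℂ))).natDegree), ?_⟩
  intro v k hk
  have hv : v = ∑ x : Fin n, v x • (Pi.single x 1 : Fin n → ℂ) := by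
    funext y
    simp [Finset.sum_apply, Pi.single_apply]
  rw [hv, map_sum, Polynomial.finset_sum_coeff]
  refine Finset.sum_eq_zero fun x _ => ?_
  rw [_root_.map_smul, Polynomial.coeff_smul]
  have hlt : (F ((Pi.single x 1 : Fin n → ℂ))).natDegree < k :=
    lt_of_le_of_lt
      (Finset.le_sup (f := fun x : Fin n => (F ((Pi.single x 1 : Fin n → ℂ))).natDegree)
        (Finset.mem_univ x)) hk
  rw [Polynomial.coeff_eq_zero_of_natDegree_lt hlt, smul_zero]

noncomputable def CMevalVec (n : ℕ) (X : Matrix (Fin n) (Fin n) ℂ) (i : Fin n → ℂ) :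
    Polynomial ℂ →ₗ[ℂ] (Fin n → ℂ) where
  toFun p := (Polynomial.aeval X p).mulVec i
  map_add' p q := by simp [map_add, Matrix.add_mulVec]
  map_smul' c p := by simp [Matrix.smul_mulVec]


/-- Every quadruple `(X, Y, i, j(x))` with `I + XY − YX = i·j(X)` is homotopic via a unique
homotopy `h` to a unique Calogero-Moser quadruple `(X, Y′, i, j₀)`: there is a unique triple
`(h, Y′, j₀)` with (a) `Y′(v) = Y·v + (h v)(X)·i`; (b) `j(v) + x·h(v) − h(X·v)` is the
constant polynomial `j₀(v)`; (c) `v + X·Y′(v) − Y′(X·v) = j₀(v)·i` for all `v`. -/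
theorem existsUnique_CM_quadruple_in_homotopy_class (n : ℕ)
    (X Y : Matrix (Fin n) (Fin n) ℂ) (i : Fin n → ℂ)
    (j : (Fin n → ℂ) →ₗ[ℂ] Polynomial ℂ)
    (hrel : ∀ v : Fin n → ℂ,
      v + (X * Y).mulVec v - (Y * X).mulVec v = (Polynomial.aeval X (j v)).mulVec i) :
    ∃! t : ((Fin n → ℂ) →ₗ[ℂ] Polynomial ℂ) ×
        ((Fin n → ℂ) →ₗ[ℂ] (Fin n → ℂ)) × ((Fin n → ℂ) →ₗ[ℂ] ℂ),
      (∀ v : Fin n → ℂ,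
        t.2.1 v = Y.mulVec v + (Polynomial.aeval X (t.1 v)).mulVec i) ∧
      (∀ v : Fin n → ℂ,
        j v + Polynomial.X * t.1 v - t.1 (X.mulVec v) = Polynomial.C (t.2.2 v)) ∧
      (∀ v : Fin n → ℂ,
        v + X.mulVec (t.2.1 v) - t.2.1 (X.mulVec v) = t.2.2 v • i) := by
  classical
  obtain ⟨D, hD⟩ := CMbound n j
  set h : (Fin n → ℂ) →ₗ[ℂ] Polynomial ℂ :=
    -∑ m ∈ Finset.range (D+1), ((CMdivX ^ (m+1)) ∘ₗ j ∘ₗ Matrix.mulVecLin (X ^ m)) with hhdef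
  set j₀ : (Fin n → ℂ) →ₗ[ℂ] ℂ :=
    ∑ m ∈ Finset.range (D+1), (Polynomial.lcoeff ℂ m) ∘ₗ j ∘ₗ Matrix.mulVecLin (X ^ m)
    with hj0def
  set Y' : (Fin n → ℂ) →ₗ[ℂ] (Fin n → ℂ) :=
    Matrix.mulVecLin Y + (CMevalVec n X i) ∘ₗ h with hYdef
  have hcoeff : ∀ (v : Fin n → ℂ) (k : ℕ),
      (h v).coeff k = -∑ m ∈ Finset.range (D+1), (j ((X ^ m).mulVec v)).coeff (k + m + 1) := by
    intro v k
    rw [hhdef]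
    simp only [LinearMap.neg_apply, LinearMap.coe_sum, Finset.sum_apply,
      LinearMap.comp_apply, Matrix.mulVecLin_apply, Polynomial.coeff_neg,
      Polynomial.finset_sum_coeff]
    congr 1
    refine Finset.sum_congr rfl fun m _ => ?_
    rw [CMdivX_pow_coeff, Nat.add_assoc]
  have hj0 : ∀ v : Fin n → ℂ,
      j₀ v = ∑ m ∈ Finset.range (D+1), (j ((X ^ m).mulVec v)).coeff m := by
    intro v
    rw [hj0def]
    simp [Polynomial.lcoeff_apply]
  have key_a : ∀ v : Fin n → ℂ,
      Y' v = Y.mulVec v + (Polynomial.aeval X (h v)).mulVec i := by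
    intro v
    rw [hYdef]
    simp [CMevalVec]
  have key_b : ∀ v : Fin n → ℂ,
      j v + Polynomial.X * h v - h (X.mulVec v) = Polynomial.C (j₀ v) := by
    intro v
    ext k
    have hmul : ∀ m : ℕ, (X ^ m).mulVec (X.mulVec v) = (X ^ (m+1)).mulVec v := by
      intro m
      rw [Matrix.mulVec_mulVec, ← pow_succ]
    cases k with
    | zero =>
        rw [Polynomial.coeff_sub, Polynomial.coeff_add, Polynomial.mul_coeff_zero,
          Polynomial.coeff_X_zero, zero_mul, Polynomial.coeff_C_zero, hcoeff, hj0]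
        simp only [hmul, Nat.zero_add]
        rw [Finset.sum_range_succ (fun m => (j ((X ^ (m+1)).mulVec v)).coeff (m + 1)) D,
          Finset.sum_range_succ' (fun m => (j ((X ^ m).mulVec v)).coeff m) D]
        have hz : (j ((X ^ (D+1)).mulVec v)).coeff (D + 1) = 0 := by apply hD; omega
        rw [hz, pow_zero, Matrix.one_mulVec]
        ring
    | succ k =>
        rw [Polynomial.coeff_sub, Polynomial.coeff_add, Polynomial.coeff_X_mul,
          Polynomial.coeff_C, if_neg (Nat.succ_ne_zero k), hcoeff, hcoeff]
        simp only [hmul]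
        have e1 : ∑ m ∈ Finset.range (D+1), (j ((X ^ (m+1)).mulVec v)).coeff (k + 1 + m + 1)
            = (∑ m ∈ Finset.range (D+1), (j ((X ^ m).mulVec v)).coeff (k + m + 1))
              + (j ((X ^ (D+1)).mulVec v)).coeff (k + (D+1) + 1)
              - (j ((X ^ 0).mulVec v)).coeff (k + 0 + 1) := by
          have e2 := Finset.sum_range_succ'
            (fun m => (j ((X ^ m).mulVec v)).coeff (k + m + 1)) (D+1)
          have e3 := Finset.sum_range_succ
            (fun m => (j ((X ^ m).mulVec v)).coeff (k + m + 1)) (D+1)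
          have e4 : ∀ m : ℕ, k + (m+1) + 1 = k + 1 + m + 1 := by omega
          simp only [e4] at e2
          rw [e3] at e2
          simp only [Nat.add_zero] at e2 ⊢
          simp only [← Nat.add_assoc] at e2 ⊢
          linear_combination -e2
        rw [e1]
        have hz : (j ((X ^ (D+1)).mulVec v)).coeff (k + (D+1) + 1) = 0 := by apply hD; omega
        rw [hz, pow_zero, Matrix.one_mulVec]
        simp only [Nat.add_zero]
        ring
  have alg_mulVec : ∀ c : ℂ,
      ((algebraMap ℂ (Matrix (Fin n) (Fin n) ℂ) c)).mulVec i = c • i := by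
    intro c
    rw [Algebra.algebraMap_eq_smul_one, Matrix.smul_mulVec, Matrix.one_mulVec]
  have key_c : ∀ v : Fin n → ℂ,
      v + X.mulVec (Y' v) - Y' (X.mulVec v) = j₀ v • i := by
    intro v
    have e1 : Polynomial.aeval X (j v + Polynomial.X * h v - h (X.mulVec v))
        = Polynomial.aeval X (Polynomial.C (j₀ v)) := by rw [key_b v]
    rw [map_sub, map_add, _root_.map_mul, Polynomial.aeval_X, Polynomial.aeval_C] at e1
    have e2 := congrArg (fun A : Matrix (Fin n) (Fin n) ℂ => A.mulVec i) e1
    simp only [Matrix.add_mulVec, Matrix.sub_mulVec] at e2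
    have goal_eq : v + X.mulVec (Y' v) - Y' (X.mulVec v)
        = (v + (X*Y).mulVec v - (Y*X).mulVec v)
          + ((X * Polynomial.aeval X (h v)).mulVec i
            - (Polynomial.aeval X (h (X.mulVec v))).mulVec i) := by
      rw [key_a v, key_a (X.mulVec v), Matrix.mulVec_add, Matrix.mulVec_mulVec,
        Matrix.mulVec_mulVec, Matrix.mulVec_mulVec]
      abel
    rw [goal_eq, hrel v, ← add_sub_assoc, e2, alg_mulVec]
  refine ⟨⟨h, Y', j₀⟩, ⟨key_a, key_b, key_c⟩, ?_⟩
  rintro ⟨h', Y'', j₀'⟩ ⟨ha', hb', hc'⟩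
  dsimp only at ha' hb' hc'
  obtain ⟨Dg, hDg⟩ := CMbound n (h' - h)
  have geq : ∀ v : Fin n → ℂ,
      Polynomial.X * ((h' - h) v) - (h' - h) (X.mulVec v)
        = Polynomial.C ((j₀' - j₀) v) := by
    intro v
    simp only [LinearMap.sub_apply, map_sub]
    linear_combination (hb' v) - (key_b v)
  have step : ∀ (v : Fin n → ℂ) (k : ℕ),
      ((h' - h) v).coeff k = ((h' - h) (X.mulVec v)).coeff (k+1) := by
    intro v k
    have e := congrArg (fun p : Polynomial ℂ => p.coeff (k+1)) (geq v)
    simp only [Polynomial.coeff_sub, Polynomial.coeff_X_mul, Polynomial.coeff_C,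
      if_neg (Nat.succ_ne_zero k)] at e
    linear_combination e
  have iter : ∀ (m : ℕ) (v : Fin n → ℂ) (k : ℕ),
      ((h' - h) v).coeff k = ((h' - h) ((X ^ m).mulVec v)).coeff (k + m) := by
    intro m
    induction m with
    | zero => intro v k; simp
    | succ m ih =>
        intro v k
        rw [ih v k, step ((X ^ m).mulVec v) (k+m), Matrix.mulVec_mulVec, ← pow_succ',
          Nat.add_assoc]
  have hgv : ∀ v : Fin n → ℂ, (h' - h) v = 0 := by
    intro v
    ext k
    rw [iter (Dg+1) v k]
    simp only [Polynomial.coeff_zero]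
    apply hDg
    omega
  have hg0 : h' = h := by
    rw [← sub_eq_zero]
    exact LinearMap.ext fun v => by rw [hgv v]; rfl
  have hj0' : j₀' = j₀ := by
    refine LinearMap.ext fun v => ?_
    have e := hb' v
    rw [hg0, key_b v] at e
    exact Polynomial.C_injective e.symm
  have hY : Y'' = Y' := by
    refine LinearMap.ext fun v => ?_
    rw [ha' v, hg0, ← key_a v]
  rw [Prod.mk.injEq, Prod.mk.injEq]
  exact ⟨hg0, hY, hj0'⟩
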